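/- For every i ∈ F_q there exist bijections f: G → G and h: G → G such that for all g, g₀ ∈ G: g·g₀⁻¹ ∈ X_0 if and only if f(g)·h(g₀)⁻¹ ∈ X_i. Consequently, the incidence structures dev(X_0) and dev(X_i), whose point sets are G and whose blocks are the right translates X_0·g (respectively X_i·g) for g ∈ G, are isomorphic. -/

import Mathlib

/-- The Heisenberg group `H₃(F)` of upper unitriangular 3×3 matrices over `F`,
recorded by the three free entries: `x` in position (1,2), `y` in position (2,3),
`z` in position (1,3). -/
@[ext]
structure Heis (F : Type*) where
  x : F
  y : F
  z : F
deriving DecidableEq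

namespace Heis

variable {F : Type*} [Field F]

/-- Multiplication corresponding to the matrix product. -/
instance : Group (Heis F) where
  mul a b := ⟨a.x + b.x, a.y + b.y, a.z + b.z + a.x * b.y⟩
  one := ⟨0, 0, 0⟩
  inv a := ⟨-a.x, -a.y, -a.z + a.x * a.y⟩
  mul_assoc a b c := Heis.ext
    (show a.x + b.x + c.x = a.x + (b.x + c.x) by ring)
    (show a.y + b.y + c.y = a.y + (b.y + c.y) by ring)
    (show a.z + b.z + a.x * b.y + c.z + (a.x + b.x) * c.y
        = a.z + (b.z + c.z + b.x * c.y) + a.x * (b.y + c.y) by ring)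
  one_mul a := Heis.ext
    (show (0 : F) + a.x = a.x by ring)
    (show (0 : F) + a.y = a.y by ring)
    (show (0 : F) + a.z + 0 * a.y = a.z by ring)
  mul_one a := Heis.ext
    (show a.x + 0 = a.x by ring)
    (show a.y + 0 = a.y by ring)
    (show a.z + 0 + a.x * 0 = a.z by ring)
  inv_mul_cancel a := Heis.ext
    (show -a.x + a.x = 0 by ring)
    (show -a.y + a.y = 0 by ring)
    (show -a.z + a.x * a.y + a.z + -a.x * a.y = 0 by ring)

instance [Fintype F] : Fintype (Heis F) :=
  Fintype.ofEquiv (F × F × F)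
    ⟨fun p => ⟨p.1, p.2.1, p.2.2⟩, fun a => (a.x, a.y, a.z), fun _ => rfl, fun _ => rfl⟩

end Heis

/-- The element `g(x,y,z)` of the Heisenberg group. -/
def gElt {F : Type*} (x y z : F) : Heis F := ⟨x, y, z⟩

/-- The center `Z = {g(0,0,z) : z ∈ F}` of the Heisenberg group, as a set. -/
def Zset (F : Type*) [Field F] : Set (Heis F) := {g : Heis F | g.x = 0 ∧ g.y = 0}

/-- The center `Z` as a subgroup of the Heisenberg group. -/
def Zsub (F : Type*) [Field F] : Subgroup (Heis F) where
  carrier := Zset F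
  mul_mem' := fun {a b} ha hb =>
    ⟨show a.x + b.x = 0 by rw [ha.1, hb.1, add_zero],
     show a.y + b.y = 0 by rw [ha.2, hb.2, add_zero]⟩
  one_mem' := ⟨rfl, rfl⟩
  inv_mem' := fun {a} ha =>
    ⟨show -a.x = 0 by rw [ha.1, neg_zero],
     show -a.y = 0 by rw [ha.2, neg_zero]⟩

/-- `γ_i(α,β) = αβ/2 + (α² − εβ²)i`. -/
def gam {F : Type*} [Field F] (ε i α β : F) : F := α * β / 2 + (α ^ 2 - ε * β ^ 2) * i

/-- `Y_i = {g(α, β, γ_i(α,β)) : (α,β) ≠ (0,0)}`. -/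
def Yset {F : Type*} [Field F] (ε i : F) : Set (Heis F) :=
  {g : Heis F | ∃ α β : F, (α, β) ≠ (0, 0) ∧ g = gElt α β (gam ε i α β)}

/-- `X_i = Y_i ∪ {e}`. -/
def Xset {F : Type*} [Field F] (ε i : F) : Set (Heis F) := Yset ε i ∪ {1}

/-- The map `ρ(M) : G → G` attached to the matrix `M = [[α,β],[εβ,α]]`. -/
def rho {F : Type*} [Field F] (ε α β : F) : Heis F → Heis F := fun g =>
  gElt (α * g.x + ε * β * g.y) (β * g.x + α * g.y)
    (α * β * (g.x ^ 2 / 2 + ε * g.y ^ 2 / 2) + ε * β ^ 2 * g.x * g.y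
      + (α ^ 2 - ε * β ^ 2) * g.z)

/-- `K = {ρ(M) : M = [[α,β],[εβ,α]], (α,β) ≠ (0,0)}`, as a set of maps `G → G`. -/
def Kset {F : Type*} [Field F] (ε : F) : Set (Heis F → Heis F) :=
  {f | ∃ α β : F, (α, β) ≠ (0, 0) ∧ f = rho ε α β}

/-- The family of sets `{e}`, `Z \ {e}`, `Y_i` for `i ∈ F`. -/
def SFam {F : Type*} [Field F] (ε : F) : Set (Set (Heis F)) :=
  insert {1} (insert (Zset F \ {1}) {S | ∃ i : F, S = Yset ε i})

/-- `f` preserves each of the basic sets `{e}`, `Z \ {e}`, `Y_i`: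
`hg⁻¹ ∈ S ↔ f(h)f(g)⁻¹ ∈ S`. -/
def Preserves {F : Type*} [Field F] (ε : F) (f : Heis F → Heis F) : Prop :=
  ∀ S ∈ SFam ε, ∀ g h : Heis F, h * g⁻¹ ∈ S ↔ f h * (f g)⁻¹ ∈ S

/-- The set of permutations of `G` of the form `x ↦ σ(x)·c` with `σ ∈ K`, `c ∈ G`. -/
def Aset {F : Type*} [Field F] (ε : F) : Set (Equiv.Perm (Heis F)) :=
  {f | ∃ σ ∈ Kset ε, ∃ c : Heis F, ∀ x : Heis F, f x = σ x * c}

/-- The operation `ψ` on `F ∪ {∞}`, with `∞` encoded as `none`. -/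
def psi {F : Type*} [Field F] [DecidableEq F] (ε : F) : Option F → Option F → Option F
  | none, j => j
  | some i, none => some i
  | some i, some j => if i + j = 0 then none else some ((i * j + ε / 16) / (i + j))

/-- `Y_k` for `k ∈ F ∪ {∞}`, where `Y_∞ = Z \ {e}`. -/
def YInf {F : Type*} [Field F] (ε : F) : Option F → Set (Heis F)
  | some i => Yset ε i
  | none => Zset F \ {1}

lemma mem_Xset_iff {F : Type*} [Field F] (ε j : F) (g : Heis F) :
    g ∈ Xset ε j ↔ g.z = gam ε j g.x g.y := by
  constructor
  · rintro (⟨α, β, -, rfl⟩ | h)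
    · rfl
    · simp only [Set.mem_singleton_iff] at h
      subst h
      show (0 : F) = gam ε j 0 0
      simp [gam]
  · intro hz
    by_cases h0 : (g.x, g.y) = (0, 0)
    · right
      have hx : g.x = 0 := congrArg Prod.fst h0
      have hy : g.y = 0 := congrArg Prod.snd h0
      have hzz : g.z = 0 := by rw [hz, hx, hy]; simp [gam]
      exact Set.mem_singleton_iff.mpr (Heis.ext hx hy hzz)
    · exact Or.inl ⟨g.x, g.y, h0, Heis.ext rfl rfl hz⟩

lemma det_ne_zero {F : Type*} [Field F] {ε : F} (h2 : (2 : F) ≠ 0)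
    (hε : ¬IsSquare ε) (i : F) : (1 : F) - 16 * ε * i ^ 2 ≠ 0 := by
  intro h
  have hi : i ≠ 0 := by
    intro hi0
    rw [hi0] at h
    simp at h
  have h4 : (4 : F) ≠ 0 := by
    intro h4
    have : (2 : F) * 2 = 0 := by rw [← h4]; norm_num
    rcases mul_eq_zero.mp this with hh | hh <;> exact h2 hh
  apply hε
  refine ⟨1 / (4 * i), ?_⟩
  have h4i : (4 : F) * i ≠ 0 := mul_ne_zero h4 hi
  field_simp
  linear_combination -h

lemma block_image {G : Type*} [Group G] {S T : Set G} {f h : G → G}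
    (hf : Function.Surjective f)
    (hmain : ∀ g g0 : G, g * g0⁻¹ ∈ S ↔ f g * (h g0)⁻¹ ∈ T) (g0 : G) :
    f '' ((fun u => u * g0) '' S) = (fun u => u * h g0) '' T := by
  ext u
  simp only [Set.mem_image]
  constructor
  · rintro ⟨w, ⟨v, hv, rfl⟩, rfl⟩
    exact ⟨f (v * g0) * (h g0)⁻¹, (hmain (v * g0) g0).1 (by simpa using hv), by simp⟩
  · rintro ⟨w, hw, rfl⟩
    obtain ⟨v, hv⟩ := hf (w * h g0)
    refine ⟨v, ⟨v * g0⁻¹, ?_, by simp⟩, hv⟩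
    exact (hmain v g0).2 (by rw [hv]; simpa using hw)

set_option maxHeartbeats 1000000 in
/-- For every `i ∈ F_q` there exist bijections `f, h : G → G` such that for
all `g, g₀ ∈ G`: `g·g₀⁻¹ ∈ X₀ ↔ f(g)·h(g₀)⁻¹ ∈ X_i`. Consequently, the incidence
structures `dev(X₀)` and `dev(X_i)`, whose point sets are `G` and whose blocks are the
right translates `X₀·g` (respectively `X_i·g`) for `g ∈ G`, are isomorphic: `f` maps the
block `X₀·g₀` onto the block `X_i·h(g₀)`. -/
theorem statement_19 {F : Type*} [Field F] [Fintype F]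
    (hodd : Odd (Fintype.card F)) (ε : F) (hε : ¬IsSquare ε) (i : F) :
    ∃ f h : Heis F → Heis F, Function.Bijective f ∧ Function.Bijective h ∧
      (∀ g g0 : Heis F, g * g0⁻¹ ∈ Xset ε 0 ↔ f g * (h g0)⁻¹ ∈ Xset ε i) ∧
      (∀ g0 : Heis F,
        f '' ((fun u => u * g0) '' Xset ε 0) = (fun u => u * h g0) '' Xset ε i) := by
  have h2 : (2 : F) ≠ 0 := by
    refine Ring.two_ne_zero fun hch => ?_
    have heven := FiniteField.even_card_of_char_two hch
    have hodd' := Nat.odd_iff.mp hodd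
    omega
  have hd : (1 : F) - 16 * ε * i ^ 2 ≠ 0 := det_ne_zero h2 hε i
  have hf : Function.Bijective (fun g : Heis F => (⟨g.x - 4 * i * ε * g.y, -(4 * i) * g.x + g.y,
      (1 - 16 * ε * i ^ 2) * (g.z - gam ε 0 g.x g.y)
        + gam ε i (g.x - 4 * i * ε * g.y) (-(4 * i) * g.x + g.y)⟩ : Heis F)) := by
    have hS1 : Function.Bijective (fun g : Heis F =>
        (⟨g.x, g.y, (1 - 16 * ε * i ^ 2) * (g.z - gam ε 0 g.x g.y)⟩ : Heis F)) := by
      refine Function.bijective_iff_has_inverse.mpr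
        ⟨fun g => ⟨g.x, g.y, g.z / (1 - 16 * ε * i ^ 2) + gam ε 0 g.x g.y⟩,
          fun g => ?_, fun g => ?_⟩ <;>
      · obtain ⟨x, y, z⟩ := g
        ext <;> (show _ = _) <;> field_simp <;> ring
    have hL : Function.Bijective (fun g : Heis F =>
        (⟨g.x - 4 * i * ε * g.y, -(4 * i) * g.x + g.y, g.z⟩ : Heis F)) := by
      refine Function.bijective_iff_has_inverse.mpr
        ⟨fun g => ⟨(g.x + 4 * i * ε * g.y) / (1 - 16 * ε * i ^ 2),
          (4 * i * g.x + g.y) / (1 - 16 * ε * i ^ 2), g.z⟩,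
          fun g => ?_, fun g => ?_⟩ <;>
      · obtain ⟨x, y, z⟩ := g
        ext <;> (show _ = _) <;> field_simp <;> ring_nf <;> field_simp [show (1:F) - i ^ 2 * ε * 16 ≠ 0 by ring_nf at hd ⊢; exact hd] <;> ring
    have hS2 : Function.Bijective (fun g : Heis F =>
        (⟨g.x, g.y, g.z + gam ε i g.x g.y⟩ : Heis F)) := by
      refine Function.bijective_iff_has_inverse.mpr
        ⟨fun g => ⟨g.x, g.y, g.z - gam ε i g.x g.y⟩, fun g => ?_, fun g => ?_⟩ <;>
      · obtain ⟨x, y, z⟩ := g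
        ext <;> (show _ = _) <;> ring
    exact hS2.comp (hL.comp hS1)
  have hh : Function.Bijective (fun g : Heis F => (⟨g.x, g.y,
      (1 - 16 * ε * i ^ 2) * (g.z + gam ε 0 g.x g.y - g.x * g.y)
        - gam ε i g.x g.y + g.x * g.y⟩ : Heis F)) := by
    refine Function.bijective_iff_has_inverse.mpr
      ⟨fun g => ⟨g.x, g.y,
        (g.z + gam ε i g.x g.y - g.x * g.y) / (1 - 16 * ε * i ^ 2)
          - gam ε 0 g.x g.y + g.x * g.y⟩, fun g => ?_, fun g => ?_⟩ <;>
    · obtain ⟨x, y, z⟩ := g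
      ext <;> (show _ = _) <;> field_simp <;> ring
  have hmain : ∀ g g0 : Heis F, g * g0⁻¹ ∈ Xset ε 0 ↔
      (fun g : Heis F => (⟨g.x - 4 * i * ε * g.y, -(4 * i) * g.x + g.y,
      (1 - 16 * ε * i ^ 2) * (g.z - gam ε 0 g.x g.y)
        + gam ε i (g.x - 4 * i * ε * g.y) (-(4 * i) * g.x + g.y)⟩ : Heis F)) g * ((fun g : Heis F => (⟨g.x, g.y,
      (1 - 16 * ε * i ^ 2) * (g.z + gam ε 0 g.x g.y - g.x * g.y)
        - gam ε i g.x g.y + g.x * g.y⟩ : Heis F)) g0)⁻¹ ∈ Xset ε i := by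
    intro g g0
    obtain ⟨x, y, z⟩ := g
    obtain ⟨a, b, c⟩ := g0
    rw [mem_Xset_iff, mem_Xset_iff]
    show z + (-c + a * b) + x * -b = gam ε 0 (x + -a) (y + -b) ↔
      ((1 - 16 * ε * i ^ 2) * (z - gam ε 0 x y)
          + gam ε i (x - 4 * i * ε * y) (-(4 * i) * x + y))
        + (-((1 - 16 * ε * i ^ 2) * (c + gam ε 0 a b - a * b) - gam ε i a b + a * b)
          + a * b)
        + (x - 4 * i * ε * y) * -b =
      gam ε i (x - 4 * i * ε * y + -a) (-(4 * i) * x + y + -b)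
    have hkey :
        (((1 - 16 * ε * i ^ 2) * (z - gam ε 0 x y)
            + gam ε i (x - 4 * i * ε * y) (-(4 * i) * x + y))
          + (-((1 - 16 * ε * i ^ 2) * (c + gam ε 0 a b - a * b) - gam ε i a b + a * b)
            + a * b)
          + (x - 4 * i * ε * y) * -b)
          - gam ε i (x - 4 * i * ε * y + -a) (-(4 * i) * x + y + -b) =
        (1 - 16 * ε * i ^ 2) *
          ((z + (-c + a * b) + x * -b) - gam ε 0 (x + -a) (y + -b)) := by
      simp only [gam]
      field_simp
      ring
    constructor
    · intro H
      linear_combination hkey + (1 - 16 * ε * i ^ 2) * H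
    · intro H
      have h' : (1 - 16 * ε * i ^ 2) *
          ((z + (-c + a * b) + x * -b) - gam ε 0 (x + -a) (y + -b)) = 0 := by
        linear_combination H - hkey
      exact sub_eq_zero.mp ((mul_eq_zero.mp h').resolve_left hd)
  exact ⟨_, _, hf, hh, hmain, fun g0 => block_image hf.2 hmain g0⟩
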